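/- Let λ ∈ (0, 0.5), τ ∈ [0,1], δ ∈ (0, 0.5), and let f★ : X → {0,1} be a classifier with γ(f★, S) ≥ τ and min_{i∈{0,1}} Pr_D[f★=1, Z=i] ≥ λ. Then with probability at least 1 − 2·exp(−δ²N/6) − 4·exp(−(1−η_0−η_1)²λ²δ²N/2400) over the flipping noise, f★ satisfies the denoised constraints with parameters (λ, δ, τ). -/

import Mathlib

open scoped Classical

noncomputable section

/-- Empirical frequency of a predicate over `N` samples. -/
def empFreq (N : ℕ) (P : Fin N → Prop) : ℝ :=
  ((Finset.univ.filter P).card : ℝ) / N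

/-- Probability, over independent flipping noise with rates `η0, η1`, of an event on the
noisy binary protected attributes. -/
def noiseProb (N : ℕ) (z : Fin N → Bool) (η0 η1 : ℝ)
    (E : (Fin N → Bool) → Prop) : ℝ :=
  ∑ zh : Fin N → Bool,
    if E zh then
      ∏ a, (if zh a = z a then 1 - cond (z a) η1 η0 else cond (z a) η1 η0)
    else 0

/-- `Pr[f = 1, Z' = i]` for the attribute assignment `z'` (true or noisy). -/
def prJoint {X : Type} (N : ℕ) (x : Fin N → X) (f : X → Bool)
    (z' : Fin N → Bool) (i : Bool) : ℝ :=
  empFreq N (fun a => f (x a) = true ∧ z' a = i)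

/-- `Pr[Z' = i]` for the attribute assignment `z'`. -/
def muOf (N : ℕ) (z' : Fin N → Bool) (i : Bool) : ℝ :=
  empFreq N (fun a => z' a = i)

/-- `Pr[f = 1 ∣ Z' = i]`. -/
def rate {X : Type} (N : ℕ) (x : Fin N → X) (f : X → Bool)
    (z' : Fin N → Bool) (i : Bool) : ℝ :=
  prJoint N x f z' i / muOf N z' i

/-- Statistical rate `γ(f, ·)` with respect to attribute assignment `z'`. -/
def gammaSR {X : Type} (N : ℕ) (x : Fin N → X) (f : X → Bool)
    (z' : Fin N → Bool) : ℝ :=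
  min (rate N x f z' false) (rate N x f z' true) /
    max (rate N x f z' false) (rate N x f z' true)

/-- Denoised rate `Γ_0(f)`. -/
def Gamma0 {X : Type} (N : ℕ) (x : Fin N → X) (η0 η1 : ℝ) (f : X → Bool)
    (zh : Fin N → Bool) : ℝ :=
  ((1 - η1) * prJoint N x f zh false - η1 * prJoint N x f zh true) /
    ((1 - η1) * muOf N zh false - η1 * muOf N zh true)

/-- Denoised rate `Γ_1(f)`. -/
def Gamma1 {X : Type} (N : ℕ) (x : Fin N → X) (η0 η1 : ℝ) (f : X → Bool)
    (zh : Fin N → Bool) : ℝ :=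
  ((1 - η0) * prJoint N x f zh true - η0 * prJoint N x f zh false) /
    ((1 - η0) * muOf N zh true - η0 * muOf N zh false)

/-- Denoised statistical rate `γ^Δ(f, Ŝ)`. -/
def gammaDelta {X : Type} (N : ℕ) (x : Fin N → X) (η0 η1 : ℝ) (f : X → Bool)
    (zh : Fin N → Bool) : ℝ :=
  min (Gamma0 N x η0 η1 f zh / Gamma1 N x η0 η1 f zh)
    (Gamma1 N x η0 η1 f zh / Gamma0 N x η0 η1 f zh)

/-- A classifier `f` satisfies the denoised constraints with parameters `(λ, δ, τ)` for the
realized noisy attributes `zh`. -/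
def satDenoised {X : Type} (N : ℕ) (x : Fin N → X) (η0 η1 lam δ τ : ℝ)
    (f : X → Bool) (zh : Fin N → Bool) : Prop :=
  ((1 - η0 - η1) * lam - δ ≤
      (1 - η1) * prJoint N x f zh false - η1 * prJoint N x f zh true) ∧
  ((1 - η0 - η1) * lam - δ ≤
      (1 - η0) * prJoint N x f zh true - η0 * prJoint N x f zh false) ∧
  (τ - δ ≤ gammaDelta N x η0 η1 f zh)

/-- coordinate weight -/
def wgt (N : ℕ) (z : Fin N → Bool) (η0 η1 : ℝ) (a : Fin N) (b : Bool) : ℝ :=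
  if b = z a then 1 - cond (z a) η1 η0 else cond (z a) η1 η0

def Wt (N : ℕ) (z : Fin N → Bool) (η0 η1 : ℝ) (zh : Fin N → Bool) : ℝ :=
  ∏ a, wgt N z η0 η1 a (zh a)

lemma wgt_nonneg {N z η0 η1} (h0 : 0 ≤ η0) (h0' : η0 ≤ 1) (h1 : 0 ≤ η1) (h1' : η1 ≤ 1)
    (a : Fin N) (b : Bool) : 0 ≤ wgt N z η0 η1 a b := by
  unfold wgt; cases z a <;> simp <;> split <;> simp_all <;> linarith

lemma wgt_le_one {N z η0 η1} (h0 : 0 ≤ η0) (h0' : η0 ≤ 1) (h1 : 0 ≤ η1) (h1' : η1 ≤ 1)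
    (a : Fin N) (b : Bool) : wgt N z η0 η1 a b ≤ 1 := by
  unfold wgt; cases z a <;> simp <;> split <;> simp_all <;> linarith

lemma wgt_sum {N z η0 η1} (a : Fin N) :
    wgt N z η0 η1 a false + wgt N z η0 η1 a true = 1 := by
  unfold wgt; cases h : z a <;> simp [h]

lemma Wt_nonneg {N z η0 η1} (h0 : 0 ≤ η0) (h0' : η0 ≤ 1) (h1 : 0 ≤ η1) (h1' : η1 ≤ 1)
    (zh : Fin N → Bool) : 0 ≤ Wt N z η0 η1 zh :=
  Finset.prod_nonneg fun a _ => wgt_nonneg h0 h0' h1 h1' a (zh a)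

lemma Wt_sum {N z η0 η1} : ∑ zh : Fin N → Bool, Wt N z η0 η1 zh = 1 := by
  unfold Wt
  rw [← Fintype.prod_sum (fun (a : Fin N) (b : Bool) => wgt N z η0 η1 a b)]
  simp [Fintype.sum_bool]
  rw [Finset.prod_eq_one]
  intro a _
  have := wgt_sum (z := z) (η0 := η0) (η1 := η1) a
  linarith

lemma noiseProb_eq {N z η0 η1} (E : (Fin N → Bool) → Prop) :
    noiseProb N z η0 η1 E = ∑ zh : Fin N → Bool, if E zh then Wt N z η0 η1 zh else 0 := rfl

lemma mgf_factor {N z η0 η1} (h : Fin N → Bool → ℝ) :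
    ∑ zh : Fin N → Bool, Wt N z η0 η1 zh * Real.exp (∑ a, h a (zh a))
      = ∏ a, (wgt N z η0 η1 a false * Real.exp (h a false)
          + wgt N z η0 η1 a true * Real.exp (h a true)) := by
  have : ∀ zh : Fin N → Bool, Wt N z η0 η1 zh * Real.exp (∑ a, h a (zh a))
      = ∏ a, (wgt N z η0 η1 a (zh a) * Real.exp (h a (zh a))) := by
    intro zh
    rw [Real.exp_sum, Wt, ← Finset.prod_mul_distrib]
  simp_rw [this]
  rw [← Fintype.prod_sum (fun (a : Fin N) (b : Bool) => wgt N z η0 η1 a b * Real.exp (h a b))]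
  congr 1; funext a
  simp [Fintype.sum_bool]; ring

lemma coord_bound {N z η0 η1} (h0 : 0 ≤ η0) (h0' : η0 ≤ 1) (h1 : 0 ≤ η1) (h1' : η1 ≤ 1)
    (a : Fin N) (s : ℝ) (v : Bool → ℝ) (hv : ∀ b, |v b| ≤ 1)
    (hmean : wgt N z η0 η1 a false * v false + wgt N z η0 η1 a true * v true = 0) :
    wgt N z η0 η1 a false * Real.exp (s * v false)
      + wgt N z η0 η1 a true * Real.exp (s * v true) ≤ Real.exp (s ^ 2 / 2) := by
  have key : ∀ b : Bool, Real.exp (s * v b)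
      ≤ (1 - v b) / 2 * Real.exp (-s) + (1 + v b) / 2 * Real.exp s := by
    intro b
    have hb := hv b
    have h1b : -1 ≤ v b := (abs_le.mp hb).1
    have h2b : v b ≤ 1 := (abs_le.mp hb).2
    have := convexOn_exp.2 (Set.mem_univ (-s)) (Set.mem_univ s)
      (by linarith : (0:ℝ) ≤ (1 - v b) / 2) (by linarith : (0:ℝ) ≤ (1 + v b) / 2)
      (by ring)
    simp only [smul_eq_mul] at this
    have harg : (1 - v b) / 2 * (-s) + (1 + v b) / 2 * s = s * v b := by ring
    rw [harg] at this
    exact this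
  have hw0 := wgt_nonneg (z := z) h0 h0' h1 h1' a false
  have hw1 := wgt_nonneg (z := z) h0 h0' h1 h1' a true
  have hws := wgt_sum (z := z) (η0 := η0) (η1 := η1) a
  have step : wgt N z η0 η1 a false * Real.exp (s * v false)
      + wgt N z η0 η1 a true * Real.exp (s * v true)
      ≤ (Real.exp s + Real.exp (-s)) / 2 := by
    have k0 := mul_le_mul_of_nonneg_left (key false) hw0
    have k1 := mul_le_mul_of_nonneg_left (key true) hw1
    have expand : wgt N z η0 η1 a false * ((1 - v false) / 2 * Real.exp (-s) + (1 + v false) / 2 * Real.exp s)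
        + wgt N z η0 η1 a true * ((1 - v true) / 2 * Real.exp (-s) + (1 + v true) / 2 * Real.exp s)
        = (Real.exp s + Real.exp (-s)) / 2 := by
      have e1 : wgt N z η0 η1 a false * (1 - v false) + wgt N z η0 η1 a true * (1 - v true) = 1 := by
        linarith
      have e2 : wgt N z η0 η1 a false * (1 + v false) + wgt N z η0 η1 a true * (1 + v true) = 1 := by
        linarith
      linear_combination (Real.exp (-s)/2) * e1 + (Real.exp s/2) * e2
    linarith
  have hc : (Real.exp s + Real.exp (-s)) / 2 = Real.cosh s := by
    rw [Real.cosh_eq]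
  rw [hc] at step
  exact step.trans (Real.cosh_le_exp_half_sq s)

lemma noiseProb_mono {N z η0 η1} (h0 : 0 ≤ η0) (h0' : η0 ≤ 1) (h1 : 0 ≤ η1) (h1' : η1 ≤ 1)
    (E F : (Fin N → Bool) → Prop) (hEF : ∀ zh, E zh → F zh) :
    noiseProb N z η0 η1 E ≤ noiseProb N z η0 η1 F := by
  rw [noiseProb_eq, noiseProb_eq]
  apply Finset.sum_le_sum
  intro zh _
  by_cases hE : E zh
  · simp [hE, hEF zh hE]
  · simp [hE]
    split
    · exact Wt_nonneg h0 h0' h1 h1' zh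
    · exact le_refl _

lemma noiseProb_union {N z η0 η1} (h0 : 0 ≤ η0) (h0' : η0 ≤ 1) (h1 : 0 ≤ η1) (h1' : η1 ≤ 1)
    (E F : (Fin N → Bool) → Prop) :
    noiseProb N z η0 η1 (fun zh => E zh ∨ F zh)
      ≤ noiseProb N z η0 η1 E + noiseProb N z η0 η1 F := by
  rw [noiseProb_eq, noiseProb_eq, noiseProb_eq, ← Finset.sum_add_distrib]
  apply Finset.sum_le_sum
  intro zh _
  have hW := Wt_nonneg (z := z) h0 h0' h1 h1' zh
  by_cases hE : E zh <;> by_cases hF : F zh <;> simp [hE, hF] <;> linarith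

lemma noiseProb_compl {N z η0 η1} (E : (Fin N → Bool) → Prop) :
    noiseProb N z η0 η1 E + noiseProb N z η0 η1 (fun zh => ¬ E zh) = 1 := by
  rw [noiseProb_eq, noiseProb_eq, ← Finset.sum_add_distrib]
  rw [← Wt_sum (N := N) (z := z) (η0 := η0) (η1 := η1)]
  apply Finset.sum_congr rfl
  intro zh _
  by_cases hE : E zh <;> simp [hE]

lemma chernoff_one {N z η0 η1} (hN : 1 ≤ N)
    (h0 : 0 ≤ η0) (h0' : η0 ≤ 1) (h1 : 0 ≤ η1) (h1' : η1 ≤ 1)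
    (c : Fin N → Bool → ℝ) (hbd : ∀ a b, |c a b| ≤ 1)
    (hmean : ∀ a, wgt N z η0 η1 a false * c a false + wgt N z η0 η1 a true * c a true = 0)
    (ε : ℝ) (hε : 0 < ε) :
    noiseProb N z η0 η1 (fun zh => (N : ℝ) * ε ≤ ∑ a, c a (zh a))
      ≤ Real.exp (-((N : ℝ) * ε ^ 2) / 2) := by
  have hNpos : (0:ℝ) < N := by exact_mod_cast hN
  have step1 : noiseProb N z η0 η1 (fun zh => (N : ℝ) * ε ≤ ∑ a, c a (zh a))
      ≤ ∑ zh : Fin N → Bool,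
          Wt N z η0 η1 zh * Real.exp (∑ a, ε * c a (zh a) - (N : ℝ) * ε ^ 2) := by
    rw [noiseProb_eq]
    apply Finset.sum_le_sum
    intro zh _
    have hW := Wt_nonneg (z := z) h0 h0' h1 h1' zh
    by_cases hE : (N : ℝ) * ε ≤ ∑ a, c a (zh a)
    · simp only [hE, if_true]
      nth_rewrite 1 [← mul_one (Wt N z η0 η1 zh)]
      apply mul_le_mul_of_nonneg_left _ hW
      rw [← Real.exp_zero]
      apply Real.exp_le_exp.mpr
      have : ∑ a, ε * c a (zh a) = ε * ∑ a, c a (zh a) := by rw [Finset.mul_sum]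
      rw [this]
      nlinarith
    · simp only [hE, if_false]
      positivity
  have step2 : ∑ zh : Fin N → Bool,
      Wt N z η0 η1 zh * Real.exp (∑ a, ε * c a (zh a) - (N : ℝ) * ε ^ 2)
      = Real.exp (-((N : ℝ) * ε ^ 2)) *
        ∑ zh : Fin N → Bool, Wt N z η0 η1 zh * Real.exp (∑ a, ε * c a (zh a)) := by
    rw [Finset.mul_sum]
    apply Finset.sum_congr rfl
    intro zh _
    rw [Real.exp_sub]
    rw [Real.exp_neg]
    field_simp
  have step3 : ∑ zh : Fin N → Bool, Wt N z η0 η1 zh * Real.exp (∑ a, ε * c a (zh a))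
      ≤ Real.exp ((N : ℝ) * ε ^ 2 / 2) := by
    rw [mgf_factor (fun a b => ε * c a b)]
    calc ∏ a, (wgt N z η0 η1 a false * Real.exp (ε * c a false)
          + wgt N z η0 η1 a true * Real.exp (ε * c a true))
        ≤ ∏ _a : Fin N, Real.exp (ε ^ 2 / 2) := by
          apply Finset.prod_le_prod
          · intro a _
            have := wgt_nonneg (z := z) h0 h0' h1 h1' a false
            have := wgt_nonneg (z := z) h0 h0' h1 h1' a true
            positivity
          · intro a _
            exact coord_bound h0 h0' h1 h1' a ε (c a) (hbd a) (hmean a)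
      _ = Real.exp ((N : ℝ) * ε ^ 2 / 2) := by
          rw [Finset.prod_const, ← Real.exp_nat_mul]
          congr 1
          simp [Finset.card_univ]
          try ring
  calc noiseProb N z η0 η1 (fun zh => (N : ℝ) * ε ≤ ∑ a, c a (zh a))
      ≤ Real.exp (-((N : ℝ) * ε ^ 2)) *
        ∑ zh : Fin N → Bool, Wt N z η0 η1 zh * Real.exp (∑ a, ε * c a (zh a)) := by
        rw [← step2]; exact step1
    _ ≤ Real.exp (-((N : ℝ) * ε ^ 2)) * Real.exp ((N : ℝ) * ε ^ 2 / 2) := by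
        apply mul_le_mul_of_nonneg_left step3 (le_of_lt (Real.exp_pos _))
    _ = Real.exp (-((N : ℝ) * ε ^ 2) / 2) := by
        rw [← Real.exp_add]; congr 1; ring

lemma lb_aux (w u a : ℝ) (h : -(w * u) ≤ a) : w * (1 - u) ≤ w + a := by nlinarith

lemma ub_aux (w u m : ℝ) (h : m ≤ w * u) : w + m ≤ w * (1 + u) := by nlinarith

lemma pos_aux (w u m : ℝ) (hw : 0 < w) (hu : 0 < 1 - u) (hm : -(w * u) ≤ m) :
    0 < w + m := by nlinarith

lemma ratio_bound (c u τ δ p q μ ν a m : ℝ)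
    (hc : 0 < c) (hu : 0 < u) (hu2 : u ≤ 1/2) (hτ0 : 0 ≤ τ) (hτ1 : τ ≤ 1)
    (hδu : 4 * u ≤ δ)
    (hp : 0 < p) (hq : 0 < q) (hμ : 0 < μ) (hν : 0 < ν)
    (ha : |a| ≤ c * p * u) (ha' : |a| ≤ c * q * u)
    (hm : |m| ≤ c * μ * u) (hm' : |m| ≤ c * ν * u)
    (hτ : τ ≤ (p * ν) / (q * μ)) :
    τ - δ ≤ ((c * p + a) / (c * μ + m)) / ((c * q - a) / (c * ν - m)) := by
  have hu1 : (0:ℝ) < 1 - u := by linarith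
  have hu3 : (0:ℝ) < 1 + u := by linarith
  have hup : (0:ℝ) < (1 + u) ^ 2 := pow_pos hu3 2
  have hA : c * p * (1 - u) ≤ c * p + a := lb_aux _ _ _ (abs_le.mp ha).1
  have hApos : 0 < c * p + a := pos_aux _ u _ (mul_pos hc hp) hu1 (abs_le.mp ha).1
  have hB : c * μ + m ≤ c * μ * (1 + u) := ub_aux _ _ _ (abs_le.mp hm).2
  have hBpos : 0 < c * μ + m := pos_aux _ u _ (mul_pos hc hμ) hu1 (abs_le.mp hm).1
  have hC : c * q - a ≤ c * q * (1 + u) := by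
    have := ub_aux (c * q) u (-a) (by linarith [(abs_le.mp ha').1] : -a ≤ c * q * u)
    linarith
  have hCpos : 0 < c * q - a := by
    have := pos_aux (c * q) u (-a) (mul_pos hc hq) hu1
      (by linarith [(abs_le.mp ha').2] : -(c * q * u) ≤ -a)
    linarith
  have hD : c * ν * (1 - u) ≤ c * ν - m := by
    have := lb_aux (c * ν) u (-m) (by linarith [(abs_le.mp hm').2] : -(c * ν * u) ≤ -m)
    linarith
  have hDpos : 0 < c * ν - m := lt_of_lt_of_le (mul_pos (mul_pos hc hν) hu1) hD
  have hBC : 0 < (c * μ + m) * (c * q - a) := mul_pos hBpos hCpos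
  have hrw : ((c * p + a) / (c * μ + m)) / ((c * q - a) / (c * ν - m))
      = ((c * p + a) * (c * ν - m)) / ((c * μ + m) * (c * q - a)) := by
    field_simp
  rw [hrw]
  have key : (c * p * (1 - u)) * (c * ν * (1 - u)) / ((c * μ * (1 + u)) * (c * q * (1 + u)))
      ≤ ((c * p + a) * (c * ν - m)) / ((c * μ + m) * (c * q - a)) := by
    apply div_le_div₀
    · positivity
    · exact mul_le_mul hA hD (le_of_lt (mul_pos (mul_pos hc hν) hu1)) (le_of_lt hApos)
    · exact hBC
    · exact mul_le_mul hB hC (le_of_lt hCpos) (by positivity)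
  have keq : (c * p * (1 - u)) * (c * ν * (1 - u)) / ((c * μ * (1 + u)) * (c * q * (1 + u)))
      = (p * ν) / (q * μ) * ((1 - u) ^ 2 / (1 + u) ^ 2) := by
    rw [div_mul_div_comm]
    rw [div_eq_div_iff (by positivity) (by positivity)]
    ring
  rw [keq] at key
  have hk : (1 - 4 * u) ≤ (1 - u) ^ 2 / (1 + u) ^ 2 := by
    rw [le_div_iff₀ hup]
    nlinarith [mul_pos (mul_pos hu hu) hu, sq_nonneg u]
  have hkpos : 0 ≤ (1 - u) ^ 2 / (1 + u) ^ 2 := by positivity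
  have step : τ * (1 - 4 * u) ≤ (p * ν) / (q * μ) * ((1 - u) ^ 2 / (1 + u) ^ 2) := by
    calc τ * (1 - 4 * u) ≤ τ * ((1 - u) ^ 2 / (1 + u) ^ 2) :=
          mul_le_mul_of_nonneg_left hk hτ0
      _ ≤ (p * ν) / (q * μ) * ((1 - u) ^ 2 / (1 + u) ^ 2) :=
          mul_le_mul_of_nonneg_right hτ hkpos
  nlinarith

lemma sum_ind (N : ℕ) (P : Fin N → Prop) :
    ∑ a, (if P a then (1:ℝ) else 0) = ((Finset.univ.filter P).card : ℝ) := by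
  rw [Finset.sum_boole]
lemma empFreq_eq_sum (N : ℕ) (P : Fin N → Prop) :
    empFreq N P = (∑ a, (if P a then (1:ℝ) else 0)) / N := by
  rw [sum_ind]; rfl
lemma empFreq_congr (N : ℕ) (P Q : Fin N → Prop) (h : ∀ a, P a ↔ Q a) :
    empFreq N P = empFreq N Q := by
  unfold empFreq
  congr 2
  exact congrArg Finset.card (Finset.filter_congr (fun a _ => by simpa using h a))
lemma empFreq_split (N : ℕ) (P : Fin N → Prop) (b : Fin N → Bool) :
    empFreq N (fun a => P a ∧ b a = false) + empFreq N (fun a => P a ∧ b a = true)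
      = empFreq N P := by
  rw [empFreq_eq_sum, empFreq_eq_sum, empFreq_eq_sum, ← add_div]
  congr 1
  rw [← Finset.sum_add_distrib]
  apply Finset.sum_congr rfl
  intro a _
  by_cases hP : P a <;> cases hb : b a <;> simp [hP, hb]
lemma empFreq_true (N : ℕ) (hN : (0:ℝ) < N) : empFreq N (fun _ => True) = 1 := by
  rw [empFreq_eq_sum]
  simp only [if_true, Finset.sum_const, Finset.card_univ, Fintype.card_fin, nsmul_eq_mul,
    mul_one]
  field_simp
lemma muOf_split (N : ℕ) (hN : (0:ℝ) < N) (b : Fin N → Bool) :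
    muOf N b false + muOf N b true = 1 := by
  unfold muOf
  rw [empFreq_congr N (fun a => b a = false) (fun a => True ∧ b a = false) (by simp),
      empFreq_congr N (fun a => b a = true) (fun a => True ∧ b a = true) (by simp),
      empFreq_split N (fun _ => True) b, empFreq_true N hN]

lemma empFreq_mono (N : ℕ) (P Q : Fin N → Prop) (h : ∀ a, P a → Q a) :
    empFreq N P ≤ empFreq N Q := by
  rw [empFreq_eq_sum, empFreq_eq_sum]
  have hsum : (∑ a, (if P a then (1:ℝ) else 0)) ≤ ∑ a, (if Q a then (1:ℝ) else 0) := by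
    apply Finset.sum_le_sum
    intro a _
    by_cases hP : P a
    · simp [hP, h a hP]
    · simp [hP]; split <;> norm_num
  rcases Nat.eq_zero_or_pos N with h0 | h0
  · subst h0; simp
  · have : (0:ℝ) < N := by exact_mod_cast h0
    exact div_le_div_of_nonneg_right hsum this.le

noncomputable def indR (P : Prop) : ℝ := if P then 1 else 0

lemma sum_indR (N : ℕ) (hN : (0:ℝ) < N) (P : Fin N → Prop) :
    ∑ a, indR (P a) = N * empFreq N P := by
  unfold indR
  rw [Finset.sum_boole]
  unfold empFreq
  field_simp

set_option maxHeartbeats 2000000 in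
lemma div_div_div_eq_aux {a b c d : ℝ} (hb : b ≠ 0) (hd : d ≠ 0) (hc : c ≠ 0) :
    (a / b) / (c / d) = (a * d) / (c * b) := by
  rw [div_div_div_eq, mul_comm b c]

set_option maxHeartbeats 2000000 in
/-- An underlying fair classifier `f★` with `γ(f★,S) ≥ τ` and
`min_i Pr_D[f★=1, Z=i] ≥ λ` satisfies the denoised constraints with parameters `(λ, δ, τ)`
with probability at least `1 − 2·exp(−δ²N/6) − 4·exp(−(1−η0−η1)²λ²δ²N/2400)`. -/
theorem stmt_9 {X : Type} (N : ℕ) (hN : 1 ≤ N)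
    (x : Fin N → X) (z : Fin N → Bool) (y : Fin N → Bool)
    (η0 η1 : ℝ) (hη0 : 0 < η0 ∧ η0 < 1/2) (hη1 : 0 < η1 ∧ η1 < 1/2)
    (hμ0 : 0 < muOf N z false) (hμ1 : 0 < muOf N z true)
    (fstar : X → Bool)
    (hwd : 0 < max (rate N x fstar z false) (rate N x fstar z true))
    (lam τ δ : ℝ) (hlam : 0 < lam ∧ lam < 1/2) (hτ : 0 ≤ τ ∧ τ ≤ 1)
    (hδ : 0 < δ ∧ δ < 1/2)
    (hfair : τ ≤ gammaSR N x fstar z)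
    (hmin : lam ≤ min (prJoint N x fstar z false) (prJoint N x fstar z true)) :
    1 - 2 * Real.exp (-(δ ^ 2 * N) / 6)
        - 4 * Real.exp (-((1 - η0 - η1) ^ 2 * lam ^ 2 * δ ^ 2 * N) / 2400) ≤
      noiseProb N z η0 η1 (fun zh => satDenoised N x η0 η1 lam δ τ fstar zh) := by

  obtain ⟨hη00, hη01⟩ := hη0
  obtain ⟨hη10, hη11⟩ := hη1
  obtain ⟨hlam0, hlam1⟩ := hlam
  obtain ⟨hτ0, hτ1⟩ := hτ
  obtain ⟨hδ0, hδ1⟩ := hδ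
  have hNpos : (0:ℝ) < N := by exact_mod_cast hN
  have hc : (0:ℝ) < 1 - η0 - η1 := by linarith
  have h00 : (0:ℝ) ≤ η0 := hη00.le
  have h01 : η0 ≤ 1 := by linarith
  have h10 : (0:ℝ) ≤ η1 := hη10.le
  have h11 : η1 ≤ 1 := by linarith
  -- shorthand numbers
  set p0 : ℝ := prJoint N x fstar z false with hp0d
  set p1 : ℝ := prJoint N x fstar z true with hp1d
  have hlp0 : lam ≤ p0 := le_trans hmin (min_le_left _ _)
  have hlp1 : lam ≤ p1 := le_trans hmin (min_le_right _ _)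
  have hp0pos : 0 < p0 := lt_of_lt_of_le hlam0 hlp0
  have hp1pos : 0 < p1 := lt_of_lt_of_le hlam0 hlp1
  have hp0μ : p0 ≤ muOf N z false :=
    empFreq_mono N _ _ (fun a h => h.2)
  have hp1μ : p1 ≤ muOf N z true :=
    empFreq_mono N _ _ (fun a h => h.2)
  have hlμ0 : lam ≤ muOf N z false := le_trans hlp0 hp0μ
  have hlμ1 : lam ≤ muOf N z true := le_trans hlp1 hp1μ
  have hμsum : muOf N z false + muOf N z true = 1 := muOf_split N hNpos z
  -- weights
  have hw0 : ∀ (a : Fin N) b, 0 ≤ wgt N z η0 η1 a b := wgt_nonneg h00 h01 h10 h11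
  have hw1 : ∀ (a : Fin N) b, wgt N z η0 η1 a b ≤ 1 := wgt_le_one h00 h01 h10 h11
  have hwsum : ∀ a : Fin N, wgt N z η0 η1 a false + wgt N z η0 η1 a true = 1 := wgt_sum
  have hwval : ∀ a : Fin N, wgt N z η0 η1 a false
      = (1 - η0) * indR (z a = false) + η1 * indR (z a = true) := by
    intro a
    cases hz : z a <;> simp [wgt, indR, hz]
  -- deviation functions
  set c1 : Fin N → Bool → ℝ := fun a b =>
    indR (fstar (x a) = true ∧ b = false) - indR (fstar (x a) = true) * wgt N z η0 η1 a false
    with hc1d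
  set c2 : Fin N → Bool → ℝ := fun a b =>
    indR (b = false) - wgt N z η0 η1 a false with hc2d
  have hbd1 : ∀ (a : Fin N) b, |c1 a b| ≤ 1 := by
    intro a b
    have h0 := hw0 a false
    have h1 := hw1 a false
    rw [hc1d]
    by_cases hf : fstar (x a) = true <;> cases b <;>
      simp [indR, hf] <;> rw [abs_le] <;> constructor <;> linarith
  have hbd2 : ∀ (a : Fin N) b, |c2 a b| ≤ 1 := by
    intro a b
    have h0 := hw0 a false
    have h1 := hw1 a false
    rw [hc2d]
    cases b <;> simp [indR] <;> rw [abs_le] <;> constructor <;> linarith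
  have hmean1 : ∀ a : Fin N, wgt N z η0 η1 a false * c1 a false
      + wgt N z η0 η1 a true * c1 a true = 0 := by
    intro a
    have hs := hwsum a
    rw [hc1d]
    by_cases hf : fstar (x a) = true <;> simp [indR, hf] <;>
      linear_combination (-(wgt N z η0 η1 a false)) * hs
  have hmean2 : ∀ a : Fin N, wgt N z η0 η1 a false * c2 a false
      + wgt N z η0 η1 a true * c2 a true = 0 := by
    intro a
    have hs := hwsum a
    rw [hc2d]
    simp [indR]
    linear_combination (-(wgt N z η0 η1 a false)) * hs
  have hbd1' : ∀ (a : Fin N) b, |(-(c1 a b))| ≤ 1 := fun a b => by rw [abs_neg]; exact hbd1 a b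
  have hbd2' : ∀ (a : Fin N) b, |(-(c2 a b))| ≤ 1 := fun a b => by rw [abs_neg]; exact hbd2 a b
  have hmean1' : ∀ a : Fin N, wgt N z η0 η1 a false * (-(c1 a false))
      + wgt N z η0 η1 a true * (-(c1 a true)) = 0 := by
    intro a; have := hmean1 a; linarith
  have hmean2' : ∀ a : Fin N, wgt N z η0 η1 a false * (-(c2 a false))
      + wgt N z η0 η1 a true * (-(c2 a true)) = 0 := by
    intro a; have := hmean2 a; linarith
  -- epsilon
  set ε : ℝ := (1 - η0 - η1) * lam * (δ / 30) with hεd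
  have hεpos : 0 < ε := by
    rw [hεd]; apply mul_pos (mul_pos hc hlam0); linarith
  have hεδ : ε ≤ δ := by
    rw [hεd]
    have hcl : (1 - η0 - η1) * lam ≤ 1 :=
      mul_le_one₀ (by linarith) hlam0.le (by linarith)
    have h30 : (0:ℝ) ≤ δ / 30 := by linarith
    have := mul_le_mul_of_nonneg_right hcl h30
    linarith
  -- sums of deviations
  have hsumc1 : ∀ zh : Fin N → Bool, ∑ a, c1 a (zh a)
      = N * prJoint N x fstar zh false - N * ((1 - η0) * p0 + η1 * p1) := by
    intro zh
    rw [hc1d]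
    rw [Finset.sum_sub_distrib]
    congr 1
    · exact sum_indR N hNpos _
    · have : ∀ a : Fin N, indR (fstar (x a) = true) * wgt N z η0 η1 a false
          = (1 - η0) * indR (fstar (x a) = true ∧ z a = false)
            + η1 * indR (fstar (x a) = true ∧ z a = true) := by
        intro a
        by_cases hf : fstar (x a) = true <;> cases hz : z a <;>
          simp [indR, wgt, hf, hz]
      rw [Finset.sum_congr rfl (fun a _ => this a), Finset.sum_add_distrib,
        ← Finset.mul_sum, ← Finset.mul_sum, sum_indR N hNpos, sum_indR N hNpos]
      rw [hp0d, hp1d]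
      unfold prJoint
      ring
  have hsumc2 : ∀ zh : Fin N → Bool, ∑ a, c2 a (zh a)
      = N * muOf N zh false - N * ((1 - η0) * muOf N z false + η1 * muOf N z true) := by
    intro zh
    rw [hc2d]
    rw [Finset.sum_sub_distrib]
    congr 1
    · exact sum_indR N hNpos _
    · rw [Finset.sum_congr rfl (fun a _ => hwval a), Finset.sum_add_distrib,
        ← Finset.mul_sum, ← Finset.mul_sum, sum_indR N hNpos, sum_indR N hNpos]
      unfold muOf
      ring
  -- deterministic implication
  have hdet : ∀ zh : Fin N → Bool,
      (|∑ a, c1 a (zh a)| ≤ (N:ℝ) * ε ∧ |∑ a, c2 a (zh a)| ≤ (N:ℝ) * ε) →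
      satDenoised N x η0 η1 lam δ τ fstar zh := by
    intro zh ⟨h1, h2⟩
    set A0 : ℝ := prJoint N x fstar zh false with hA0d
    set A1 : ℝ := prJoint N x fstar zh true with hA1d
    set m0 : ℝ := muOf N zh false with hm0d
    set m1 : ℝ := muOf N zh true with hm1d
    set aD : ℝ := A0 - ((1 - η0) * p0 + η1 * p1) with haDd
    set mD : ℝ := m0 - ((1 - η0) * muOf N z false + η1 * muOf N z true) with hmDd
    have haD : |aD| ≤ ε := by
      have := hsumc1 zh
      rw [← hA0d] at this
      have heq : ∑ a, c1 a (zh a) = N * aD := by rw [haDd]; rw [this]; ring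
      rw [heq, abs_mul, abs_of_pos hNpos] at h1
      exact le_of_mul_le_mul_left (by linarith) hNpos
    have hmD : |mD| ≤ ε := by
      have := hsumc2 zh
      rw [← hm0d] at this
      have heq : ∑ a, c2 a (zh a) = N * mD := by rw [hmDd]; rw [this]; ring
      rw [heq, abs_mul, abs_of_pos hNpos] at h2
      exact le_of_mul_le_mul_left (by linarith) hNpos
    have hsumA : A0 + A1 = p0 + p1 := by
      rw [hA0d, hA1d, hp0d, hp1d]
      unfold prJoint
      rw [empFreq_split N (fun a => fstar (x a) = true) zh,
        empFreq_split N (fun a => fstar (x a) = true) z]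
    have hsumm : m0 + m1 = 1 := muOf_split N hNpos zh
    have e1 : (1 - η1) * A0 - η1 * A1 = (1 - η0 - η1) * p0 + aD := by
      rw [haDd]; linear_combination (-η1) * hsumA
    have e2 : (1 - η0) * A1 - η0 * A0 = (1 - η0 - η1) * p1 - aD := by
      rw [haDd]; linear_combination (1 - η0) * hsumA
    have e3 : (1 - η1) * m0 - η1 * m1 = (1 - η0 - η1) * muOf N z false + mD := by
      rw [hmDd]; linear_combination (-η1) * hsumm + η1 * hμsum
    have e4 : (1 - η0) * m1 - η0 * m0 = (1 - η0 - η1) * muOf N z true - mD := by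
      rw [hmDd]; linear_combination (1 - η0) * hsumm + (η0 - 1) * hμsum
    have haD1 := (abs_le.mp haD).1
    have haD2 := (abs_le.mp haD).2
    refine ⟨?_, ?_, ?_⟩
    · show (1 - η0 - η1) * lam - δ ≤ (1 - η1) * A0 - η1 * A1
      rw [e1]
      have := mul_le_mul_of_nonneg_left hlp0 hc.le
      linarith
    · show (1 - η0 - η1) * lam - δ ≤ (1 - η0) * A1 - η0 * A0
      rw [e2]
      have := mul_le_mul_of_nonneg_left hlp1 hc.le
      linarith
    · -- gammaDelta bound
      have hg0 : Gamma0 N x η0 η1 fstar zh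
          = ((1 - η0 - η1) * p0 + aD) / ((1 - η0 - η1) * muOf N z false + mD) := by
        unfold Gamma0
        rw [← hA0d, ← hA1d, ← hm0d, ← hm1d, e1, e3]
      have hg1 : Gamma1 N x η0 η1 fstar zh
          = ((1 - η0 - η1) * p1 - aD) / ((1 - η0 - η1) * muOf N z true - mD) := by
        unfold Gamma1
        rw [← hA0d, ← hA1d, ← hm0d, ← hm1d, e2, e4]
      have hu : (0:ℝ) < δ / 30 := by linarith
      have hu2 : δ / 30 ≤ 1/2 := by linarith
      have hδu : 4 * (δ / 30) ≤ δ := by linarith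
      have hτr0 : τ ≤ (p0 * muOf N z true) / (p1 * muOf N z false) := by
        have hgam : gammaSR N x fstar z
            = min (p0 / muOf N z false) (p1 / muOf N z true)
              / max (p0 / muOf N z false) (p1 / muOf N z true) := rfl
        have hr1pos : 0 < p1 / muOf N z true := div_pos hp1pos hμ1
        have hstep : min (p0 / muOf N z false) (p1 / muOf N z true)
            / max (p0 / muOf N z false) (p1 / muOf N z true)
            ≤ (p0 / muOf N z false) / (p1 / muOf N z true) := by
          apply div_le_div₀ (le_of_lt (div_pos hp0pos hμ0)) (min_le_left _ _) hr1pos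
            (le_max_right _ _)
        have heq2 : (p0 / muOf N z false) / (p1 / muOf N z true)
            = (p0 * muOf N z true) / (p1 * muOf N z false) :=
          div_div_div_eq_aux hμ0.ne' hμ1.ne' hp1pos.ne'
        rw [hgam] at hfair
        rw [heq2] at hstep
        linarith
      have hτr1 : τ ≤ (p1 * muOf N z false) / (p0 * muOf N z true) := by
        have hgam : gammaSR N x fstar z
            = min (p0 / muOf N z false) (p1 / muOf N z true)
              / max (p0 / muOf N z false) (p1 / muOf N z true) := rfl
        have hr0pos : 0 < p0 / muOf N z false := div_pos hp0pos hμ0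
        have hstep : min (p0 / muOf N z false) (p1 / muOf N z true)
            / max (p0 / muOf N z false) (p1 / muOf N z true)
            ≤ (p1 / muOf N z true) / (p0 / muOf N z false) := by
          apply div_le_div₀ (le_of_lt (div_pos hp1pos hμ1)) (min_le_right _ _) hr0pos
            (le_max_left _ _)
        have heq2 : (p1 / muOf N z true) / (p0 / muOf N z false)
            = (p1 * muOf N z false) / (p0 * muOf N z true) :=
          div_div_div_eq_aux hμ1.ne' hμ0.ne' hp0pos.ne'
        rw [hgam] at hfair
        rw [heq2] at hstep
        linarith
      have hεp0 : |aD| ≤ (1 - η0 - η1) * p0 * (δ/30) := by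
        refine le_trans haD ?_
        rw [hεd]
        have h30 : (0:ℝ) ≤ δ / 30 := by linarith
        have := mul_le_mul_of_nonneg_right (mul_le_mul_of_nonneg_left hlp0 hc.le) h30
        linarith
      have hεp1 : |aD| ≤ (1 - η0 - η1) * p1 * (δ/30) := by
        refine le_trans haD ?_
        rw [hεd]
        have h30 : (0:ℝ) ≤ δ / 30 := by linarith
        have := mul_le_mul_of_nonneg_right (mul_le_mul_of_nonneg_left hlp1 hc.le) h30
        linarith
      have hεμ0 : |mD| ≤ (1 - η0 - η1) * muOf N z false * (δ/30) := by
        refine le_trans hmD ?_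
        rw [hεd]
        have h30 : (0:ℝ) ≤ δ / 30 := by linarith
        have := mul_le_mul_of_nonneg_right (mul_le_mul_of_nonneg_left hlμ0 hc.le) h30
        linarith
      have hεμ1 : |mD| ≤ (1 - η0 - η1) * muOf N z true * (δ/30) := by
        refine le_trans hmD ?_
        rw [hεd]
        have h30 : (0:ℝ) ≤ δ / 30 := by linarith
        have := mul_le_mul_of_nonneg_right (mul_le_mul_of_nonneg_left hlμ1 hc.le) h30
        linarith
      have hμ0pos : 0 < muOf N z false := hμ0
      have hμ1pos : 0 < muOf N z true := hμ1
      have k1 : τ - δ ≤ Gamma0 N x η0 η1 fstar zh / Gamma1 N x η0 η1 fstar zh := by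
        rw [hg0, hg1]
        exact ratio_bound (1 - η0 - η1) (δ/30) τ δ p0 p1 (muOf N z false) (muOf N z true)
          aD mD hc hu hu2 hτ0 hτ1 hδu hp0pos hp1pos hμ0pos hμ1pos hεp0 hεp1 hεμ0 hεμ1 hτr0
      have k2 : τ - δ ≤ Gamma1 N x η0 η1 fstar zh / Gamma0 N x η0 η1 fstar zh := by
        rw [hg0, hg1]
        have := ratio_bound (1 - η0 - η1) (δ/30) τ δ p1 p0 (muOf N z true) (muOf N z false)
          (-aD) (-mD) hc hu hu2 hτ0 hτ1 hδu hp1pos hp0pos hμ1pos hμ0pos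
          (by rw [abs_neg]; exact hεp1) (by rw [abs_neg]; exact hεp0)
          (by rw [abs_neg]; exact hεμ1) (by rw [abs_neg]; exact hεμ0) hτr1
        have heq3 : ((1 - η0 - η1) * p1 + -aD) / ((1 - η0 - η1) * muOf N z true + -mD)
            / (((1 - η0 - η1) * p0 - -aD) / ((1 - η0 - η1) * muOf N z false - -mD))
            = ((1 - η0 - η1) * p1 - aD) / ((1 - η0 - η1) * muOf N z true - mD)
            / (((1 - η0 - η1) * p0 + aD) / ((1 - η0 - η1) * muOf N z false + mD)) := by
          rw [sub_neg_eq_add, sub_neg_eq_add, ← sub_eq_add_neg, ← sub_eq_add_neg]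
        rw [heq3] at this
        exact this
      exact le_min k1 k2
  -- probabilistic part
  have hGmono : noiseProb N z η0 η1
      (fun zh => |∑ a, c1 a (zh a)| ≤ (N:ℝ) * ε ∧ |∑ a, c2 a (zh a)| ≤ (N:ℝ) * ε)
      ≤ noiseProb N z η0 η1 (fun zh => satDenoised N x η0 η1 lam δ τ fstar zh) :=
    noiseProb_mono h00 h01 h10 h11 _ _ hdet
  have hcompl := noiseProb_compl (N := N) (z := z) (η0 := η0) (η1 := η1)
    (fun zh => |∑ a, c1 a (zh a)| ≤ (N:ℝ) * ε ∧ |∑ a, c2 a (zh a)| ≤ (N:ℝ) * ε)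
  have hNε : 0 < (N:ℝ) * ε := mul_pos hNpos hεpos
  have hbad : noiseProb N z η0 η1
      (fun zh => ¬ (|∑ a, c1 a (zh a)| ≤ (N:ℝ) * ε ∧ |∑ a, c2 a (zh a)| ≤ (N:ℝ) * ε))
      ≤ 4 * Real.exp (-((N:ℝ) * ε ^ 2) / 2) := by
    have hsub : ∀ zh : Fin N → Bool,
        (¬ (|∑ a, c1 a (zh a)| ≤ (N:ℝ) * ε ∧ |∑ a, c2 a (zh a)| ≤ (N:ℝ) * ε)) →
        (((N:ℝ) * ε ≤ ∑ a, c1 a (zh a)) ∨ ((N:ℝ) * ε ≤ ∑ a, -(c1 a (zh a)))) ∨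
        (((N:ℝ) * ε ≤ ∑ a, c2 a (zh a)) ∨ ((N:ℝ) * ε ≤ ∑ a, -(c2 a (zh a)))) := by
      intro zh hng
      rw [not_and_or] at hng
      rcases hng with hng | hng
      · left
        rcases le_abs.mp (le_of_lt (lt_of_not_ge hng)) with h | h
        · exact Or.inl h
        · right; rw [Finset.sum_neg_distrib]; exact h
      · right
        rcases le_abs.mp (le_of_lt (lt_of_not_ge hng)) with h | h
        · exact Or.inl h
        · right; rw [Finset.sum_neg_distrib]; exact h
    have t1 : noiseProb N z η0 η1
        (fun zh => ¬ (|∑ a, c1 a (zh a)| ≤ (N:ℝ) * ε ∧ |∑ a, c2 a (zh a)| ≤ (N:ℝ) * ε))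
        ≤ noiseProb N z η0 η1 (fun zh =>
            ((((N:ℝ) * ε ≤ ∑ a, c1 a (zh a)) ∨ ((N:ℝ) * ε ≤ ∑ a, -(c1 a (zh a)))) ∨
            (((N:ℝ) * ε ≤ ∑ a, c2 a (zh a)) ∨ ((N:ℝ) * ε ≤ ∑ a, -(c2 a (zh a)))))) :=
      noiseProb_mono h00 h01 h10 h11 _ _ hsub
    have t2 : noiseProb N z η0 η1 (fun zh =>
            ((((N:ℝ) * ε ≤ ∑ a, c1 a (zh a)) ∨ ((N:ℝ) * ε ≤ ∑ a, -(c1 a (zh a)))) ∨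
            (((N:ℝ) * ε ≤ ∑ a, c2 a (zh a)) ∨ ((N:ℝ) * ε ≤ ∑ a, -(c2 a (zh a))))))
        ≤ (noiseProb N z η0 η1 (fun zh => (((N:ℝ) * ε ≤ ∑ a, c1 a (zh a)) ∨ ((N:ℝ) * ε ≤ ∑ a, -(c1 a (zh a)))))) +
          (noiseProb N z η0 η1 (fun zh => (((N:ℝ) * ε ≤ ∑ a, c2 a (zh a)) ∨ ((N:ℝ) * ε ≤ ∑ a, -(c2 a (zh a)))))) :=
      noiseProb_union h00 h01 h10 h11 _ _
    have t3 : noiseProb N z η0 η1 (fun zh => (((N:ℝ) * ε ≤ ∑ a, c1 a (zh a)) ∨ ((N:ℝ) * ε ≤ ∑ a, -(c1 a (zh a)))))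
        ≤ (noiseProb N z η0 η1 (fun zh => ((N:ℝ) * ε ≤ ∑ a, c1 a (zh a)))) +
          (noiseProb N z η0 η1 (fun zh => ((N:ℝ) * ε ≤ ∑ a, -(c1 a (zh a))))) :=
      noiseProb_union h00 h01 h10 h11 _ _
    have t4 : noiseProb N z η0 η1 (fun zh => (((N:ℝ) * ε ≤ ∑ a, c2 a (zh a)) ∨ ((N:ℝ) * ε ≤ ∑ a, -(c2 a (zh a)))))
        ≤ (noiseProb N z η0 η1 (fun zh => ((N:ℝ) * ε ≤ ∑ a, c2 a (zh a)))) +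
          (noiseProb N z η0 η1 (fun zh => ((N:ℝ) * ε ≤ ∑ a, -(c2 a (zh a))))) :=
      noiseProb_union h00 h01 h10 h11 _ _
    have b1 := chernoff_one hN h00 h01 h10 h11 c1 hbd1 hmean1 ε hεpos
    have b2 := chernoff_one hN h00 h01 h10 h11 (fun a b => -(c1 a b)) hbd1' hmean1' ε hεpos
    have b3 := chernoff_one hN h00 h01 h10 h11 c2 hbd2 hmean2 ε hεpos
    have b4 := chernoff_one hN h00 h01 h10 h11 (fun a b => -(c2 a b)) hbd2' hmean2' ε hεpos
    linarith
  -- final numeric chain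
  have hεsq : ε ^ 2 = (1 - η0 - η1) ^ 2 * lam ^ 2 * δ ^ 2 / 900 := by
    rw [hεd]; ring
  have hexp : 4 * Real.exp (-((N:ℝ) * ε ^ 2) / 2)
      ≤ 4 * Real.exp (-((1 - η0 - η1) ^ 2 * lam ^ 2 * δ ^ 2 * N) / 2400) := by
    have h4 : (0:ℝ) < 4 := by norm_num
    apply mul_le_mul_of_nonneg_left _ (by norm_num : (0:ℝ) ≤ 4)
    apply Real.exp_le_exp.mpr
    rw [hεsq]
    have hnn : 0 ≤ (1 - η0 - η1) ^ 2 * lam ^ 2 * δ ^ 2 * N :=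
      mul_nonneg (mul_nonneg (mul_nonneg (sq_nonneg _) (sq_nonneg _)) (sq_nonneg _)) hNpos.le
    linarith [hnn]
  have hexp2 : 0 < 2 * Real.exp (-(δ ^ 2 * N) / 6) := by positivity
  linarith
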